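/- Let K ≤ 0 be a real number and let f: ℝ → ℝ be C² with f(t) > 0 and f''(t) + K f(t) ≤ 0 for all t ∈ ℝ. Then sup over t ∈ ℝ of (f'(t)² + K f(t)²) equals K · (inf over t ∈ ℝ of f(t))². -/

import Mathlib

open Set Filter

section aux

variable (K : ℝ) (f : ℝ → ℝ)

/-- Key lemma: if f' t0 < 0 and the energy at t0 exceeds K m², contradiction. -/
lemma key_aux (hK : K ≤ 0) (hf : ContDiff ℝ 2 f)
    (hpos : ∀ t, 0 < f t)
    (hineq : ∀ t, deriv (deriv f) t + K * f t ≤ 0)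
    (m : ℝ) (hm0 : 0 ≤ m) (hmle : ∀ t, m ≤ f t)
    (t0 : ℝ) (hd : deriv f t0 < 0)
    (hE : K * m ^ 2 < deriv f t0 ^ 2 + K * f t0 ^ 2) : False := by
  have h2 : ContDiff ℝ ((1 : WithTop ℕ∞) + 1) f := by
    have : ((1 : WithTop ℕ∞) + 1) = 2 := by norm_num
    rw [this]; exact hf
  rw [contDiff_succ_iff_deriv] at h2
  obtain ⟨hdf, -, hf1⟩ := h2
  have hdf2 : Differentiable ℝ (deriv f) := hf1.differentiable one_ne_zero
  have hcd2 : Continuous (deriv (deriv f)) := (contDiff_one_iff_deriv.mp hf1).2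
  set E : ℝ → ℝ := fun t => deriv f t ^ 2 + K * f t ^ 2 with hEdef
  have hEderiv : ∀ t, HasDerivAt E (2 * deriv f t * deriv (deriv f) t
      + K * (2 * f t * deriv f t)) t := by
    intro t
    have h1 : HasDerivAt (fun t => deriv f t ^ 2)
        ((2 : ℕ) * deriv f t ^ 1 * deriv (deriv f) t) t := (hdf2 t).hasDerivAt.pow 2
    have h2 : HasDerivAt (fun t => K * f t ^ 2)
        (K * ((2 : ℕ) * f t ^ 1 * deriv f t)) t := ((hdf t).hasDerivAt.pow 2).const_mul K
    have := h1.fun_add h2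
    simpa [pow_one, mul_comm, mul_assoc, mul_left_comm] using this
  have hEdiff : Differentiable ℝ E := fun t => (hEderiv t).differentiableAt
  have hEderiv' : ∀ t, deriv E t = 2 * deriv f t * (deriv (deriv f) t + K * f t) := by
    intro t
    rw [(hEderiv t).deriv]; ring
  -- monotonicity of E on intervals where f' ≤ 0
  have hmono : ∀ a b : ℝ, (∀ s ∈ Icc a b, deriv f s ≤ 0) → MonotoneOn E (Icc a b) := by
    intro a b hneg
    apply monotoneOn_of_deriv_nonneg (convex_Icc a b) hEdiff.continuous.continuousOn
      hEdiff.differentiableOn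
    intro x hx
    rw [interior_Icc] at hx
    rw [hEderiv' x]
    have h1 := hneg x (Ioo_subset_Icc_self hx)
    have h2 := hineq x
    nlinarith
  have hKm : ∀ t, K * f t ^ 2 ≤ K * m ^ 2 := by
    intro t
    have h1 : m ^ 2 ≤ f t ^ 2 := by nlinarith [hmle t]
    exact mul_le_mul_of_nonpos_left h1 hK
  -- Step A: deriv f never vanishes on [t0, ∞)
  have stepA : ∀ t, t0 ≤ t → deriv f t ≠ 0 := by
    by_contra hcon
    push_neg at hcon
    obtain ⟨t1', ht1', hz'⟩ := hcon
    set S : Set ℝ := {t | t0 ≤ t ∧ deriv f t = 0} with hS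
    have hSne : S.Nonempty := ⟨t1', ht1', hz'⟩
    have hSclosed : IsClosed S := by
      have : S = Ici t0 ∩ (deriv f) ⁻¹' {0} := by ext x; simp [hS, Set.mem_setOf_eq]
      rw [this]
      exact isClosed_Ici.inter (isClosed_singleton.preimage hdf2.continuous)
    have hSbdd : BddBelow S := ⟨t0, fun x hx => hx.1⟩
    set t1 := sInf S with ht1def
    have ht1mem : t1 ∈ S := hSclosed.csInf_mem hSne hSbdd
    have ht01 : t0 ≤ t1 := ht1mem.1
    have hz : deriv f t1 = 0 := ht1mem.2
    have hneg : ∀ s ∈ Icc t0 t1, deriv f s ≤ 0 := by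
      intro s hs
      by_contra hpos'
      push_neg at hpos'
      have hst1 : s < t1 := by
        rcases lt_or_eq_of_le hs.2 with h | h
        · exact h
        · rw [h] at hpos'; linarith [hpos', hz]
      have : (0 : ℝ) ∈ Icc (deriv f t0) (deriv f s) := ⟨hd.le, hpos'.le⟩
      obtain ⟨z, hzmem, hz0⟩ := intermediate_value_Icc hs.1
        (hdf2.continuous.continuousOn) this
      have : z ∈ S := ⟨hzmem.1, hz0⟩
      have := csInf_le hSbdd this
      linarith [hzmem.2]
    have hE1 : E t0 ≤ E t1 := hmono t0 t1 hneg ⟨le_refl t0, ht01⟩ ⟨ht01, le_refl t1⟩ ht01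
    have hz2 : deriv f t1 ^ 2 = 0 := by rw [hz]; ring
    have := hKm t1
    simp only [hEdef] at hE1
    linarith
  -- Step B: deriv f < 0 on [t0, ∞)
  have stepB : ∀ t, t0 ≤ t → deriv f t < 0 := by
    intro t ht
    rcases lt_trichotomy (deriv f t) 0 with h | h | h
    · exact h
    · exact absurd h (stepA t ht)
    · exfalso
      have : (0 : ℝ) ∈ Icc (deriv f t0) (deriv f t) := ⟨hd.le, h.le⟩
      obtain ⟨z, hzmem, hz0⟩ := intermediate_value_Icc ht
        (hdf2.continuous.continuousOn) this
      exact stepA z hzmem.1 hz0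
  -- Step C: E t ≥ E t0 for t ≥ t0
  have stepC : ∀ t, t0 ≤ t → E t0 ≤ E t := by
    intro t ht
    exact hmono t0 t (fun s hs => (stepB s hs.1).le) ⟨le_refl t0, ht⟩ ⟨ht, le_refl t⟩ ht
  -- Step D
  set δ := (deriv f t0 ^ 2 + K * f t0 ^ 2) - K * m ^ 2 with hδdef
  have hδpos : 0 < δ := by linarith
  have hsq : Real.sqrt δ ^ 2 = δ := Real.sq_sqrt hδpos.le
  have hsqrtpos : 0 < Real.sqrt δ := Real.sqrt_pos.mpr hδpos
  have stepD : ∀ t, t0 ≤ t → deriv f t ≤ -Real.sqrt δ := by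
    intro t ht
    have h1 := stepC t ht
    have h2 := hKm t
    have h3 : δ ≤ deriv f t ^ 2 := by simp only [hEdef] at h1; linarith
    have h4 := stepB t ht
    nlinarith
  -- Step E: linear decay contradicts positivity
  have hd' : ∀ x : ℝ, HasDerivAt (fun t => f t + Real.sqrt δ * t)
      (deriv f x + Real.sqrt δ) x := by
    intro x
    simpa using (hdf x).hasDerivAt.fun_add ((hasDerivAt_id x).const_mul (Real.sqrt δ))
  have hanti : AntitoneOn (fun t => f t + Real.sqrt δ * t) (Ici t0) := by
    apply antitoneOn_of_deriv_nonpos (convex_Ici t0)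
    · exact fun x _ => (hd' x).continuousAt.continuousWithinAt
    · exact fun x hx => (hd' x).differentiableAt.differentiableWithinAt
    · intro x hx
      rw [interior_Ici] at hx
      rw [(hd' x).deriv]
      linarith [stepD x (le_of_lt hx)]
  have hT0 : t0 ≤ t0 + f t0 / Real.sqrt δ + 1 := by
    have h1 : 0 ≤ f t0 / Real.sqrt δ := le_of_lt (div_pos (hpos t0) hsqrtpos)
    linarith
  have hfinal := hanti self_mem_Ici hT0 hT0
  simp only at hfinal
  have hfT := hpos (t0 + f t0 / Real.sqrt δ + 1)
  have hdiv : Real.sqrt δ * (f t0 / Real.sqrt δ) = f t0 := by field_simp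
  nlinarith [hfinal, hdiv, hsqrtpos, hfT]


/-- The energy is bounded above by `K m²`. -/
lemma bound_aux (hK : K ≤ 0) (hf : ContDiff ℝ 2 f)
    (hpos : ∀ t, 0 < f t)
    (hineq : ∀ t, deriv (deriv f) t + K * f t ≤ 0)
    (m : ℝ) (hm0 : 0 ≤ m) (hmle : ∀ t, m ≤ f t)
    (t0 : ℝ) : deriv f t0 ^ 2 + K * f t0 ^ 2 ≤ K * m ^ 2 := by
  by_contra hE
  push_neg at hE
  rcases lt_trichotomy (deriv f t0) 0 with h | h | h
  · exact key_aux K f hK hf hpos hineq m hm0 hmle t0 h hE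
  · rw [h] at hE
    have h1 : m ^ 2 ≤ f t0 ^ 2 := by nlinarith [hmle t0]
    have := mul_le_mul_of_nonpos_left h1 hK
    nlinarith
  · -- reflect: g t = f (-t)
    set g : ℝ → ℝ := fun t => f (-t) with hgdef
    have hgc : ContDiff ℝ 2 g := hf.comp contDiff_neg
    have hgd : deriv g = fun t => -deriv f (-t) := by
      funext t
      exact deriv_comp_neg f t
    have hgd2 : ∀ t, deriv (deriv g) t = deriv (deriv f) (-t) := by
      intro t
      rw [hgd]
      have : (fun t : ℝ => -deriv f (-t)) = fun t => -((fun s => deriv f (-s)) t) := rfl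
      rw [this, deriv.fun_neg, deriv_comp_neg (deriv f) t, neg_neg]
    have hgineq : ∀ t, deriv (deriv g) t + K * g t ≤ 0 := by
      intro t
      rw [hgd2]
      exact hineq (-t)
    have hgpos : ∀ t, 0 < g t := fun t => hpos (-t)
    have hgmle : ∀ t, m ≤ g t := fun t => hmle (-t)
    apply key_aux K g hK hgc hgpos hgineq m hm0 hgmle (-t0)
    · rw [hgd]
      simp only [neg_neg]
      linarith
    · rw [hgd]
      simp only [hgdef, neg_neg]
      nlinarith [hE]

end aux

theorem statement_4' (K : ℝ) (hK : K ≤ 0) (f : ℝ → ℝ) (hf : ContDiff ℝ 2 f)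
    (hpos : ∀ t, 0 < f t)
    (hineq : ∀ t, deriv (deriv f) t + K * f t ≤ 0) :
    sSup (Set.range fun t => deriv f t ^ 2 + K * f t ^ 2)
      = K * (sInf (Set.range f)) ^ 2 := by
  set m := sInf (Set.range f) with hmdef
  have hrne : (Set.range f).Nonempty := ⟨f 0, Set.mem_range_self 0⟩
  have hbdd : BddBelow (Set.range f) := ⟨0, by rintro y ⟨t, rfl⟩; exact (hpos t).le⟩
  have hm0 : 0 ≤ m := le_csInf hrne (by rintro y ⟨t, rfl⟩; exact (hpos t).le)
  have hmle : ∀ t, m ≤ f t := fun t => csInf_le hbdd (Set.mem_range_self t)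
  have hub : ∀ t, deriv f t ^ 2 + K * f t ^ 2 ≤ K * m ^ 2 :=
    bound_aux K f hK hf hpos hineq m hm0 hmle
  have hEne : (Set.range fun t => deriv f t ^ 2 + K * f t ^ 2).Nonempty :=
    ⟨_, Set.mem_range_self 0⟩
  have hle : sSup (Set.range fun t => deriv f t ^ 2 + K * f t ^ 2) ≤ K * m ^ 2 :=
    csSup_le hEne (by rintro y ⟨t, rfl⟩; exact hub t)
  have hEbdd : BddAbove (Set.range fun t => deriv f t ^ 2 + K * f t ^ 2) :=
    ⟨K * m ^ 2, by rintro y ⟨t, rfl⟩; exact hub t⟩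
  have hge : K * m ^ 2 ≤ sSup (Set.range fun t => deriv f t ^ 2 + K * f t ^ 2) := by
    -- choose tₙ with f tₙ < m + 1/(n+1)
    have hex : ∀ n : ℕ, ∃ t : ℝ, f t < m + 1 / (n + 1) := by
      intro n
      have hlt : m < m + 1 / (n + 1) := by
        have : (0 : ℝ) < 1 / (n + 1) := by positivity
        linarith
      obtain ⟨y, ⟨t, rfl⟩, hy⟩ := exists_lt_of_csInf_lt hrne hlt
      exact ⟨t, hy⟩
    choose ts hts using hex
    have hstep : ∀ n : ℕ, K * (m + 1 / (n + 1)) ^ 2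
        ≤ sSup (Set.range fun t => deriv f t ^ 2 + K * f t ^ 2) := by
      intro n
      have h1 : f (ts n) ^ 2 ≤ (m + 1 / (n + 1)) ^ 2 := by
        have := hts n
        nlinarith [hpos (ts n)]
      have h2 : K * (m + 1 / (n + 1)) ^ 2 ≤ K * f (ts n) ^ 2 :=
        mul_le_mul_of_nonpos_left h1 hK
      have h3 : K * f (ts n) ^ 2 ≤ deriv f (ts n) ^ 2 + K * f (ts n) ^ 2 := by
        nlinarith [sq_nonneg (deriv f (ts n))]
      have h4 := le_csSup hEbdd (Set.mem_range_self (f := fun t =>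
        deriv f t ^ 2 + K * f t ^ 2) (ts n))
      calc K * (m + 1 / (n + 1)) ^ 2 ≤ K * f (ts n) ^ 2 := h2
        _ ≤ deriv f (ts n) ^ 2 + K * f (ts n) ^ 2 := h3
        _ ≤ _ := h4
    have htend : Filter.Tendsto (fun n : ℕ => K * (m + 1 / (n + 1)) ^ 2)
        Filter.atTop (nhds (K * m ^ 2)) := by
      have h0 : Filter.Tendsto (fun n : ℕ => m + 1 / ((n : ℝ) + 1))
          Filter.atTop (nhds (m + 0)) :=
        tendsto_const_nhds.add tendsto_one_div_add_atTop_nhds_zero_nat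
      rw [add_zero] at h0
      exact ((h0.pow 2).const_mul K)
    exact le_of_tendsto' htend hstep
  linarith



/-- For `K ≤ 0` and a positive `C²` solution of `f'' + K f ≤ 0` on `ℝ`, the supremum of
`(f')² + K f²` equals `K` times the square of the infimum of `f`. -/
theorem statement_4 (K : ℝ) (hK : K ≤ 0) (f : ℝ → ℝ) (hf : ContDiff ℝ 2 f)
    (hpos : ∀ t, 0 < f t)
    (hineq : ∀ t, deriv (deriv f) t + K * f t ≤ 0) :
    sSup (Set.range fun t => deriv f t ^ 2 + K * f t ^ 2)
      = K * (sInf (Set.range f)) ^ 2 := by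
  exact statement_4' K hK f hf hpos hineq
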